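/- In the root system of type $A_{\ell+m+n-1}$ with simple roots $\alpha_1,\ldots,\alpha_{\ell+m+n-1}$ (for integers $\ell,m,n \ge 1$), let $\Theta = \Sigma \setminus \{\alpha_\ell, \alpha_{\ell+m}\}$ and $\delta_P = \sum_{\gamma\in\Pi^+\setminus\langle\Theta\rangle^+}\gamma$. Then $\langle\delta_P, h_{\alpha_\ell}^\vee\rangle = \ell + m$ and $\langle\delta_P, h_{\alpha_{\ell+m}}^\vee\rangle = m + n$. -/

import Mathlib

open Finset
open scoped Classical

noncomputable section

/-- `i`-th standard basis vector of `ℚ^k`. -/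
def E (k : ℕ) (i : Fin k) : Fin k → ℚ := fun j => if j = i then 1 else 0

/-- The Euclidean inner product on `ℚ^k`. -/
def dot {k : ℕ} (v w : Fin k → ℚ) : ℚ := ∑ i, v i * w i

/-- The pairing `⟨β, h_γ^∨⟩ = 2(β,γ)/(γ,γ)` of `β` with the coroot of `γ`. -/
def pairing {k : ℕ} (β γ : Fin k → ℚ) : ℚ := 2 * dot β γ / dot γ γ

/-- The set `⟨Θ⟩⁺` of positive roots that are integral combinations of elements of `Θ`. -/
def spanPos {k : ℕ} (pos Θ : Finset (Fin k → ℚ)) : Finset (Fin k → ℚ) :=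
  pos.filter fun γ => ∃ c : (Fin k → ℚ) → ℤ, γ = ∑ θ ∈ Θ, (c θ : ℚ) • θ

/-- `δ_P`, the sum of the positive roots not lying in the integral span of `Θ`. -/
def deltaP {k : ℕ} (pos Θ : Finset (Fin k → ℚ)) : Fin k → ℚ :=
  ∑ γ ∈ pos \ spanPos pos Θ, γ

/-- Positive roots of type `A_{k-1}`: the vectors `e_i - e_j`, `i < j`. -/
def posA (k : ℕ) : Finset (Fin k → ℚ) :=
  ((univ : Finset (Fin k × Fin k)).filter fun p => p.1 < p.2).image
    fun p => E k p.1 - E k p.2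

/-- Simple roots of type `A_{k-1}`: `α_{i+1} = e_i - e_{i+1}` (0-based `i`, `i+1 < k`). -/
def simpleA (k : ℕ) (i : Fin k) : Fin k → ℚ :=
  if h : i.val + 1 < k then E k i - E k ⟨i.val + 1, h⟩ else 0

lemma dot_E_E {k : ℕ} (i j : Fin k) : dot (E k i) (E k j) = if i = j then 1 else 0 := by
  simp [dot, E, mul_ite, ite_mul, mul_one, mul_zero, Finset.sum_ite_eq', eq_comm]

lemma dot_sub_left {k : ℕ} (u v w : Fin k → ℚ) : dot (u - v) w = dot u w - dot v w := by
  simp [dot, sub_mul, Finset.sum_sub_distrib]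

lemma dot_sub_right {k : ℕ} (u v w : Fin k → ℚ) : dot u (v - w) = dot u v - dot u w := by
  simp [dot, mul_sub, Finset.sum_sub_distrib]

lemma eval_one {k : ℕ} {i j t : Fin k} (hij : i ≠ j) : (E k i - E k j) t = 1 ↔ t = i := by
  simp only [Pi.sub_apply, E]
  split_ifs <;> simp_all <;> norm_num

lemma eval_neg_one {k : ℕ} {i j t : Fin k} (hij : i ≠ j) : (E k i - E k j) t = -1 ↔ t = j := by
  simp only [Pi.sub_apply, E]
  split_ifs <;> simp_all <;> norm_num

lemma pairmap_inj {k : ℕ} {i j i' j' : Fin k} (h1 : i ≠ j) (h2 : i' ≠ j')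
    (h : E k i - E k j = E k i' - E k j') : i = i' ∧ j = j' := by
  constructor
  · have : (E k i' - E k j') i = 1 := by rw [← h]; exact (eval_one h1).mpr rfl
    exact ((eval_one h2).mp this).symm ▸ rfl
  · have : (E k i' - E k j') j = -1 := by rw [← h]; exact (eval_neg_one h1).mpr rfl
    exact ((eval_neg_one h2).mp this).symm ▸ rfl

/-- truncated coordinate-sum functional -/

def F (k c : ℕ) (v : Fin k → ℚ) : ℚ := ∑ t ∈ univ.filter (fun t : Fin k => t.val < c), v t

lemma F_sum {k c : ℕ} {ι : Type*} (s : Finset ι) (g : ι → Fin k → ℚ) :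
    F k c (∑ x ∈ s, g x) = ∑ x ∈ s, F k c (g x) := by
  simp only [F, Finset.sum_apply]
  exact Finset.sum_comm

lemma F_smul {k c : ℕ} (q : ℚ) (v : Fin k → ℚ) : F k c (q • v) = q * F k c v := by
  simp [F, Finset.mul_sum]

lemma F_sub {k c : ℕ} (u v : Fin k → ℚ) : F k c (u - v) = F k c u - F k c v := by
  simp [F, Finset.sum_sub_distrib]

lemma F_E {k c : ℕ} (i : Fin k) : F k c (E k i) = if i.val < c then 1 else 0 := by
  simp [F, E, Finset.sum_ite_eq', Finset.mem_filter]

lemma F_simpleA {k c : ℕ} (i : Fin k) (h1 : i.val + 1 < k) (h2 : i.val + 1 ≠ c) :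
    F k c (simpleA k i) = 0 := by
  rw [simpleA, dif_pos h1, F_sub, F_E, F_E]
  simp only [Fin.val_mk]
  split_ifs <;> first | omega | norm_num

lemma F_span_zero {k c : ℕ} {Θ : Finset (Fin k → ℚ)} {γ : Fin k → ℚ}
    (hθ : ∀ θ ∈ Θ, F k c θ = 0)
    (hγ : ∃ co : (Fin k → ℚ) → ℤ, γ = ∑ θ ∈ Θ, (co θ : ℚ) • θ) : F k c γ = 0 := by
  obtain ⟨co, rfl⟩ := hγ
  rw [F_sum]
  refine Finset.sum_eq_zero fun θ hθ' => ?_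
  rw [F_smul, hθ θ hθ', mul_zero]

/-- extended simple root indexed by ℕ -/

def G (k a : ℕ) : Fin k → ℚ := if h : a < k then simpleA k ⟨a, h⟩ else 0

lemma telescope (k i : ℕ) : ∀ j, i ≤ j → j < k →
    (∑ a ∈ Finset.Ico i j, G k a) = fun t : Fin k =>
      (if t.val = i then (1:ℚ) else 0) - (if t.val = j then 1 else 0) := by
  intro j hij
  induction j, hij using Nat.le_induction with
  | base => intro _; funext t; simp
  | succ j hij ih =>
    intro hjk
    have hj : j < k := by omega
    funext t
    rw [Finset.sum_Ico_succ_top hij, Pi.add_apply, ih hj]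
    have : G k j = E k ⟨j, hj⟩ - E k ⟨j+1, hjk⟩ := by
      rw [G, dif_pos hj, simpleA, dif_pos hjk]
    rw [this]
    simp only [Pi.sub_apply, E, Fin.ext_iff]
    split_ifs <;> first | norm_num | (exfalso; omega)

lemma mem_posA {k : ℕ} {i j : Fin k} (hij : i < j) : E k i - E k j ∈ posA k := by
  rw [posA, Finset.mem_image]
  exact ⟨(i, j), by simp [hij], rfl⟩

lemma span_iff (ℓ m n : ℕ) (hℓ : 1 ≤ ℓ) (hm : 1 ≤ m) (hn : 1 ≤ n)
    (Θ : Finset (Fin (ℓ + m + n) → ℚ))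
    (hΘ : Θ = ((univ : Finset (Fin (ℓ + m + n))).filter fun i =>
        i.val + 1 < ℓ + m + n ∧ i.val + 1 ≠ ℓ ∧ i.val + 1 ≠ ℓ + m).image
      (simpleA (ℓ + m + n)))
    (i j : Fin (ℓ + m + n)) (hij : i < j) :
    (E (ℓ+m+n) i - E (ℓ+m+n) j ∈ spanPos (posA (ℓ+m+n)) Θ) ↔
      ((i.val < ℓ ↔ j.val < ℓ) ∧ (i.val < ℓ + m ↔ j.val < ℓ + m)) := by
  constructor
  · intro hmem
    rw [spanPos, Finset.mem_filter] at hmem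
    obtain ⟨-, hco⟩ := hmem
    have hz : ∀ c : ℕ, c ≠ 0 → (∀ i0 : Fin (ℓ+m+n), i0.val + 1 ≠ c) = True → True := fun _ _ _ => trivial
    have key : ∀ c : ℕ, (∀ θ ∈ Θ, F (ℓ+m+n) c θ = 0) → ((i.val < c) ↔ (j.val < c)) := by
      intro c hzero
      have h0 : F (ℓ+m+n) c (E (ℓ+m+n) i - E (ℓ+m+n) j) = 0 := F_span_zero hzero hco
      rw [F_sub, F_E, F_E] at h0
      split_ifs at h0 <;> first | tauto | norm_num at h0
    have hzc : ∀ c : ℕ, c = ℓ ∨ c = ℓ + m → ∀ θ ∈ Θ, F (ℓ+m+n) c θ = 0 := by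
      intro c hc θ hθ
      rw [hΘ, Finset.mem_image] at hθ
      obtain ⟨i0, hi0, rfl⟩ := hθ
      rw [Finset.mem_filter] at hi0
      obtain ⟨-, h1, h2, h3⟩ := hi0
      refine F_simpleA i0 h1 ?_
      rcases hc with rfl | rfl <;> assumption
    exact ⟨key ℓ (hzc ℓ (Or.inl rfl)), key (ℓ+m) (hzc (ℓ+m) (Or.inr rfl))⟩
  · intro hsame
    rw [spanPos, Finset.mem_filter]
    refine ⟨mem_posA hij, ?_⟩
    have hij' : i.val < j.val := hij
    refine ⟨fun θ => if θ ∈ (Finset.Ico i.val j.val).image (G (ℓ+m+n)) then 1 else 0, ?_⟩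
    set S : Finset (Fin (ℓ+m+n) → ℚ) := (Finset.Ico i.val j.val).image (G (ℓ+m+n)) with hS
    have hSsub : S ⊆ Θ := by
      intro θ hθ
      rw [hS, Finset.mem_image] at hθ
      obtain ⟨a, ha, rfl⟩ := hθ
      rw [Finset.mem_Ico] at ha
      have hak : a < ℓ+m+n := by omega
      rw [hΘ, Finset.mem_image]
      refine ⟨⟨a, hak⟩, ?_, ?_⟩
      · rw [Finset.mem_filter]
        refine ⟨Finset.mem_univ _, by simp only [Fin.val_mk]; omega,
          by simp only [Fin.val_mk]; omega, by simp only [Fin.val_mk]; omega⟩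
      · rw [G, dif_pos hak]
    have hGinj : ∀ a ∈ Finset.Ico i.val j.val, ∀ b ∈ Finset.Ico i.val j.val,
        G (ℓ+m+n) a = G (ℓ+m+n) b → a = b := by
      intro a ha b hb hab
      rw [Finset.mem_Ico] at ha hb
      have hak : a + 1 < ℓ+m+n := by omega
      have hbk : b + 1 < ℓ+m+n := by omega
      rw [G, dif_pos (by omega : a < ℓ+m+n), G, dif_pos (by omega : b < ℓ+m+n),
        simpleA, simpleA, dif_pos hak, dif_pos hbk] at hab
      have := pairmap_inj (by simp [Fin.ext_iff]) (by simp [Fin.ext_iff]) hab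
      simpa [Fin.ext_iff] using this.1
    have hsum : ∑ θ ∈ Θ, (((if θ ∈ S then 1 else 0 : ℤ)) : ℚ) • θ = ∑ θ ∈ S, θ := by
      simp only [apply_ite (fun z : ℤ => (z : ℚ)), Int.cast_one, Int.cast_zero,
        ite_smul, one_smul, zero_smul]
      rw [Finset.sum_ite_mem, Finset.inter_eq_right.mpr hSsub]
    rw [hsum, hS, Finset.sum_image hGinj,
      telescope (ℓ+m+n) i.val j.val (le_of_lt hij') j.isLt]
    funext t
    simp [E, Fin.ext_iff]

lemma dot_sum_left {k : ℕ} {ι : Type*} (s : Finset ι) (g : ι → Fin k → ℚ) (w : Fin k → ℚ) :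
    dot (∑ x ∈ s, g x) w = ∑ x ∈ s, dot (g x) w := by
  simp only [dot, Finset.sum_apply, Finset.sum_mul]
  exact Finset.sum_comm

lemma dot_pair {k : ℕ} (i j a b : Fin k) :
    dot (E k i - E k j) (E k a - E k b) =
      (if i = a then (1:ℚ) else 0) - (if i = b then 1 else 0)
        - (if j = a then 1 else 0) + (if j = b then 1 else 0) := by
  rw [dot_sub_left, dot_sub_right, dot_sub_right, dot_E_E, dot_E_E, dot_E_E, dot_E_E]
  ring

lemma deltaP_eq (ℓ m n : ℕ) (hℓ : 1 ≤ ℓ) (hm : 1 ≤ m) (hn : 1 ≤ n)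
    (Θ : Finset (Fin (ℓ + m + n) → ℚ))
    (hΘ : Θ = ((univ : Finset (Fin (ℓ + m + n))).filter fun i =>
        i.val + 1 < ℓ + m + n ∧ i.val + 1 ≠ ℓ ∧ i.val + 1 ≠ ℓ + m).image
      (simpleA (ℓ + m + n))) :
    deltaP (posA (ℓ+m+n)) Θ =
      ∑ p ∈ (univ : Finset (Fin (ℓ+m+n) × Fin (ℓ+m+n))).filter
          (fun p => p.1 < p.2 ∧
            ¬((p.1.val < ℓ ↔ p.2.val < ℓ) ∧ (p.1.val < ℓ+m ↔ p.2.val < ℓ+m))),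
        (E (ℓ+m+n) p.1 - E (ℓ+m+n) p.2) := by
  rw [deltaP]
  have hset : posA (ℓ+m+n) \ spanPos (posA (ℓ+m+n)) Θ =
      ((univ : Finset (Fin (ℓ+m+n) × Fin (ℓ+m+n))).filter
          (fun p => p.1 < p.2 ∧
            ¬((p.1.val < ℓ ↔ p.2.val < ℓ) ∧ (p.1.val < ℓ+m ↔ p.2.val < ℓ+m)))).image
        (fun p => E (ℓ+m+n) p.1 - E (ℓ+m+n) p.2) := by
    ext γ
    rw [Finset.mem_sdiff, Finset.mem_image]
    constructor
    · rintro ⟨hpos, hnspan⟩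
      rw [posA, Finset.mem_image] at hpos
      obtain ⟨p, hp, rfl⟩ := hpos
      rw [Finset.mem_filter] at hp
      refine ⟨p, ?_, rfl⟩
      rw [Finset.mem_filter]
      exact ⟨Finset.mem_univ _, hp.2, fun hsame =>
        hnspan ((span_iff ℓ m n hℓ hm hn Θ hΘ p.1 p.2 hp.2).mpr hsame)⟩
    · rintro ⟨p, hp, rfl⟩
      rw [Finset.mem_filter] at hp
      obtain ⟨-, hlt, hnsame⟩ := hp
      exact ⟨mem_posA hlt, fun hspan =>
        hnsame ((span_iff ℓ m n hℓ hm hn Θ hΘ p.1 p.2 hlt).mp hspan)⟩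
  rw [hset]
  refine Finset.sum_image ?_
  intro p hp q hq hpq
  rw [Finset.mem_coe, Finset.mem_filter] at hp hq
  have h1 := pairmap_inj (ne_of_lt hp.2.1) (ne_of_lt hq.2.1) hpq
  exact Prod.ext h1.1 h1.2

lemma filter_fst_eq {k : ℕ} (Q : Fin k → Fin k → Prop) (a : Fin k) :
    ((univ : Finset (Fin k × Fin k)).filter fun p => Q p.1 p.2 ∧ p.1 = a) =
      (univ.filter fun j => Q a j).image (fun j => (a, j)) := by
  ext p
  simp only [Finset.mem_filter, Finset.mem_univ, true_and, Finset.mem_image, Prod.ext_iff]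
  constructor
  · rintro ⟨hq, rfl⟩
    exact ⟨p.2, hq, rfl, rfl⟩
  · rintro ⟨j, hq, h1, h2⟩
    rw [← h1, ← h2]
    exact ⟨hq, h1 ▸ rfl⟩

lemma filter_snd_eq {k : ℕ} (Q : Fin k → Fin k → Prop) (a : Fin k) :
    ((univ : Finset (Fin k × Fin k)).filter fun p => Q p.1 p.2 ∧ p.2 = a) =
      (univ.filter fun i => Q i a).image (fun i => (i, a)) := by
  ext p
  simp only [Finset.mem_filter, Finset.mem_univ, true_and, Finset.mem_image, Prod.ext_iff]
  constructor
  · rintro ⟨hq, rfl⟩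
    exact ⟨p.1, hq, rfl, rfl⟩
  · rintro ⟨j, hq, h1, h2⟩
    rw [← h1, ← h2]
    exact ⟨hq, h2 ▸ rfl⟩

lemma card_filter_fst {k : ℕ} (Q : Fin k → Fin k → Prop) (a : Fin k) :
    #(((univ : Finset (Fin k × Fin k)).filter fun p => Q p.1 p.2 ∧ p.1 = a)) =
      #(univ.filter fun j => Q a j) := by
  rw [filter_fst_eq]
  exact Finset.card_image_of_injective _ (fun x y h => by simpa [Prod.ext_iff] using h)

lemma card_filter_snd {k : ℕ} (Q : Fin k → Fin k → Prop) (a : Fin k) :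
    #(((univ : Finset (Fin k × Fin k)).filter fun p => Q p.1 p.2 ∧ p.2 = a)) =
      #(univ.filter fun i => Q i a) := by
  rw [filter_snd_eq]
  exact Finset.card_image_of_injective _ (fun x y h => by simpa [Prod.ext_iff] using h)

lemma pairing_formula {k : ℕ} (C : Finset (Fin k × Fin k)) (a b : Fin k) (hab : a ≠ b) :
    pairing (∑ p ∈ C, (E k p.1 - E k p.2)) (E k a - E k b) =
      (#(C.filter fun p => p.1 = a) : ℚ) - #(C.filter fun p => p.1 = b)
        - #(C.filter fun p => p.2 = a) + #(C.filter fun p => p.2 = b) := by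
  have hden : dot (E k a - E k b) (E k a - E k b) = 2 := by
    rw [dot_pair, if_pos rfl, if_pos rfl, if_neg hab, if_neg (Ne.symm hab)]
    norm_num
  rw [pairing, hden, dot_sum_left,
    Finset.sum_congr rfl (fun p _ => dot_pair p.1 p.2 a b),
    Finset.sum_add_distrib, Finset.sum_sub_distrib, Finset.sum_sub_distrib,
    Finset.sum_boole, Finset.sum_boole, Finset.sum_boole, Finset.sum_boole]
  ring

lemma card_fst {k : ℕ} (C : Finset (Fin k × Fin k)) (a : Fin k) (D : Finset (Fin k))
    (h : ∀ j : Fin k, (a, j) ∈ C ↔ j ∈ D) :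
    #(C.filter fun p => p.1 = a) = #D := by
  have hset : C.filter (fun p => p.1 = a) = D.image (fun j => (a, j)) := by
    ext p
    obtain ⟨p1, p2⟩ := p
    simp only [Finset.mem_filter, Finset.mem_image]
    constructor
    · rintro ⟨hc, hp⟩
      subst hp
      exact ⟨p2, (h p2).mp hc, rfl⟩
    · rintro ⟨j, hj, hji⟩
      rw [Prod.mk.injEq] at hji
      obtain ⟨rfl, rfl⟩ := hji
      exact ⟨(h _).mpr hj, rfl⟩
  rw [hset, Finset.card_image_of_injective _ (fun x y hxy => by simpa [Prod.ext_iff] using hxy)]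

lemma card_snd {k : ℕ} (C : Finset (Fin k × Fin k)) (a : Fin k) (D : Finset (Fin k))
    (h : ∀ i : Fin k, (i, a) ∈ C ↔ i ∈ D) :
    #(C.filter fun p => p.2 = a) = #D := by
  have hset : C.filter (fun p => p.2 = a) = D.image (fun i => (i, a)) := by
    ext p
    obtain ⟨p1, p2⟩ := p
    simp only [Finset.mem_filter, Finset.mem_image]
    constructor
    · rintro ⟨hc, hp⟩
      subst hp
      exact ⟨p1, (h p1).mp hc, rfl⟩
    · rintro ⟨i, hi, hji⟩
      rw [Prod.mk.injEq] at hji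
      obtain ⟨rfl, rfl⟩ := hji
      exact ⟨(h _).mpr hi, rfl⟩
  rw [hset, Finset.card_image_of_injective _ (fun x y hxy => by simpa [Prod.ext_iff] using hxy)]

/-- Koszul numbers for `SU(ℓ+m+n)/S(U(ℓ)×U(m)×U(n))`: in type `A_{ℓ+m+n-1}` with
`Θ = Σ \ {α_ℓ, α_{ℓ+m}}`, one has `⟨δ_P, h_{α_ℓ}^∨⟩ = ℓ + m` and
`⟨δ_P, h_{α_{ℓ+m}}^∨⟩ = m + n`. -/
theorem stmt4 (ℓ m n : ℕ) (hℓ : 1 ≤ ℓ) (hm : 1 ≤ m) (hn : 1 ≤ n)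
    (Θ : Finset (Fin (ℓ + m + n) → ℚ))
    (hΘ : Θ = ((univ : Finset (Fin (ℓ + m + n))).filter fun i =>
        i.val + 1 < ℓ + m + n ∧ i.val + 1 ≠ ℓ ∧ i.val + 1 ≠ ℓ + m).image
      (simpleA (ℓ + m + n))) :
    pairing (deltaP (posA (ℓ + m + n)) Θ) (simpleA (ℓ + m + n) ⟨ℓ - 1, by omega⟩) =
      (ℓ : ℚ) + m ∧
    pairing (deltaP (posA (ℓ + m + n)) Θ) (simpleA (ℓ + m + n) ⟨ℓ + m - 1, by omega⟩) =
      (m : ℚ) + n := by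
  have hd := deltaP_eq ℓ m n hℓ hm hn Θ hΘ
  have hs1 : simpleA (ℓ+m+n) ⟨ℓ - 1, by omega⟩ =
      E (ℓ+m+n) ⟨ℓ-1, by omega⟩ - E (ℓ+m+n) ⟨ℓ, by omega⟩ := by
    rw [simpleA, dif_pos (by simp only [Fin.val_mk]; omega)]
    congr 1
    exact congrArg (E (ℓ+m+n)) (Fin.ext (by simp only [Fin.val_mk]; omega))
  have hs2 : simpleA (ℓ+m+n) ⟨ℓ + m - 1, by omega⟩ =
      E (ℓ+m+n) ⟨ℓ+m-1, by omega⟩ - E (ℓ+m+n) ⟨ℓ+m, by omega⟩ := by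
    rw [simpleA, dif_pos (by simp only [Fin.val_mk]; omega)]
    congr 1
    exact congrArg (E (ℓ+m+n)) (Fin.ext (by simp only [Fin.val_mk]; omega))
  constructor
  · rw [hd, hs1, pairing_formula _ ⟨ℓ-1, by omega⟩ ⟨ℓ, by omega⟩
      (by simp only [ne_eq, Fin.mk.injEq]; omega)]
    rw [card_fst _ _ (Finset.Ici (⟨ℓ, by omega⟩ : Fin (ℓ+m+n)))
        (fun j => by
          simp only [Finset.mem_filter, Finset.mem_univ, true_and, Finset.mem_Ici,
            Fin.lt_def, Fin.le_def, Fin.val_mk]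
          omega),
      card_fst _ _ (Finset.Ici (⟨ℓ+m, by omega⟩ : Fin (ℓ+m+n)))
        (fun j => by
          simp only [Finset.mem_filter, Finset.mem_univ, true_and, Finset.mem_Ici,
            Fin.lt_def, Fin.le_def, Fin.val_mk]
          omega),
      card_snd _ _ (∅ : Finset (Fin (ℓ+m+n)))
        (fun i => by
          simp only [Finset.mem_filter, Finset.mem_univ, true_and,
            Finset.notMem_empty, iff_false, Fin.lt_def, Fin.val_mk]
          omega),
      card_snd _ _ (Finset.Iio (⟨ℓ, by omega⟩ : Fin (ℓ+m+n)))
        (fun i => by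
          simp only [Finset.mem_filter, Finset.mem_univ, true_and, Finset.mem_Iio,
            Fin.lt_def, Fin.val_mk]
          omega),
      Fin.card_Ici, Fin.card_Ici, Fin.card_Iio, Finset.card_empty]
    simp only [Fin.val_mk]
    rw [show ℓ + m + n - ℓ = m + n by omega, show ℓ + m + n - (ℓ + m) = n by omega]
    push_cast
    ring
  · rw [hd, hs2, pairing_formula _ ⟨ℓ+m-1, by omega⟩ ⟨ℓ+m, by omega⟩
      (by simp only [ne_eq, Fin.mk.injEq]; omega)]
    rw [card_fst _ _ (Finset.Ici (⟨ℓ+m, by omega⟩ : Fin (ℓ+m+n)))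
        (fun j => by
          simp only [Finset.mem_filter, Finset.mem_univ, true_and, Finset.mem_Ici,
            Fin.lt_def, Fin.le_def, Fin.val_mk]
          omega),
      card_fst _ _ (∅ : Finset (Fin (ℓ+m+n)))
        (fun j => by
          simp only [Finset.mem_filter, Finset.mem_univ, true_and,
            Finset.notMem_empty, iff_false, Fin.lt_def, Fin.val_mk]
          omega),
      card_snd _ _ (Finset.Iio (⟨ℓ, by omega⟩ : Fin (ℓ+m+n)))
        (fun i => by
          simp only [Finset.mem_filter, Finset.mem_univ, true_and, Finset.mem_Iio,
            Fin.lt_def, Fin.val_mk]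
          omega),
      card_snd _ _ (Finset.Iio (⟨ℓ+m, by omega⟩ : Fin (ℓ+m+n)))
        (fun i => by
          simp only [Finset.mem_filter, Finset.mem_univ, true_and, Finset.mem_Iio,
            Fin.lt_def, Fin.val_mk]
          omega),
      Fin.card_Ici, Fin.card_Iio, Fin.card_Iio, Finset.card_empty]
    simp only [Fin.val_mk]
    rw [show ℓ + m + n - (ℓ + m) = n by omega]
    push_cast
    ring
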